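/- (a) For every prime ideal P of R, the ideal (P : G) is G-prime. (b) If Q is a G-prime ideal of R and P is a prime ideal of R minimal over Q, then Q = (P : G), every prime ideal of R minimal over Q lies in the G-orbit of P, and Q is a semiprime ideal (an intersection of prime ideals). -/

import Mathlib

/-- An ideal (i.e. left ideal) of a not-necessarily-commutative ring is two-sided. -/
def IsTwoSidedI {R : Type*} [Ring R] (I : Ideal R) : Prop :=
  ∀ a ∈ I, ∀ r : R, a * r ∈ I

/-- A (two-sided) ideal `P` is prime: it is proper and `IJ ⊆ P` forces `I ⊆ P` or `J ⊆ P`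
for all two-sided ideals `I`, `J`. -/
def IsPrimeTS {R : Type*} [Ring R] (P : Ideal R) : Prop :=
  IsTwoSidedI P ∧ P ≠ ⊤ ∧
    ∀ I J : Ideal R, IsTwoSidedI I → IsTwoSidedI J →
      (∀ a ∈ I, ∀ b ∈ J, a * b ∈ P) → I ≤ P ∨ J ≤ P

/-- `J` is `X`-semiprime: an intersection of a collection of `X`-prime ideals. -/
def IsXSemiprime {R : Type*} [Ring R] (𝒳 : Set (Ideal R)) (J : Ideal R) : Prop :=
  ∃ T ⊆ 𝒳, J = sInf T


/-- The translate of an ideal under the ring automorphism given by a group element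
(expressed as a preimage, which for a group action gives the same family of translates). -/
def gTrans {R : Type*} [Ring R] {G : Type*} [Group G] [MulSemiringAction G R]
    (g : G) (I : Ideal R) : Ideal R :=
  Ideal.comap (MulSemiringAction.toRingHom G R g) I

/-- A `G`-ideal: a two-sided ideal stable under the action of `G`. -/
def IsGIdeal {R : Type*} [Ring R] (G : Type*) [Group G] [MulSemiringAction G R]
    (I : Ideal R) : Prop :=
  IsTwoSidedI I ∧ ∀ g : G, gTrans g I = I

/-- A `G`-prime ideal: a proper `G`-ideal `Q` with `IJ ⊆ Q → I ⊆ Q ∨ J ⊆ Q`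
for all `G`-ideals `I`, `J`. -/
def IsGPrime {R : Type*} [Ring R] (G : Type*) [Group G] [MulSemiringAction G R]
    (Q : Ideal R) : Prop :=
  IsGIdeal G Q ∧ Q ≠ ⊤ ∧
    ∀ I J : Ideal R, IsGIdeal G I → IsGIdeal G J →
      (∀ a ∈ I, ∀ b ∈ J, a * b ∈ Q) → I ≤ Q ∨ J ≤ Q

/-- `(I : G) = ⋂_{g ∈ G} g(I)`, the largest `G`-ideal contained in `I`. -/
noncomputable def resGIdeal {R : Type*} [Ring R] (G : Type*) [Group G] [MulSemiringAction G R]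
    (I : Ideal R) : Ideal R :=
  ⨅ g : G, gTrans g I

section PMul
variable {R : Type*} [Ring R]

/-- product of ideals as left ideals -/
def pmul (I J : Ideal R) : Ideal R := Ideal.span (Set.image2 (· * ·) I J)

lemma mem_pmul {I J : Ideal R} {a b : R} (ha : a ∈ I) (hb : b ∈ J) : a * b ∈ pmul I J :=
  Ideal.subset_span ⟨a, ha, b, hb, rfl⟩

lemma pmul_le {I J K : Ideal R} : pmul I J ≤ K ↔ ∀ a ∈ I, ∀ b ∈ J, a * b ∈ K := by
  constructor
  · intro h a ha b hb; exact h (mem_pmul ha hb)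
  · intro h
    refine Ideal.span_le.2 ?_
    rintro x ⟨a, ha, b, hb, rfl⟩
    exact h a ha b hb

lemma pmul_mono {I I' J J' : Ideal R} (h1 : I ≤ I') (h2 : J ≤ J') : pmul I J ≤ pmul I' J' :=
  pmul_le.2 fun a ha b hb => mem_pmul (h1 ha) (h2 hb)

lemma pmul_le_left {I J : Ideal R} (hI : IsTwoSidedI I) : pmul I J ≤ I :=
  pmul_le.2 fun a ha b _ => hI a ha b

lemma pmul_le_right {I J : Ideal R} : pmul I J ≤ J :=
  pmul_le.2 fun a _ b hb => J.smul_mem a hb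

lemma le_pmul_top {I : Ideal R} : I ≤ pmul I ⊤ := by
  intro a ha
  simpa using mem_pmul ha (Submodule.mem_top (x := (1 : R)))

lemma le_top_pmul {I : Ideal R} : I ≤ pmul ⊤ I := by
  intro a ha
  simpa using mem_pmul (Submodule.mem_top (x := (1 : R))) ha

lemma pmul_twoSided {I J : Ideal R} (hJ : IsTwoSidedI J) : IsTwoSidedI (pmul I J) := by
  intro x hx r
  induction hx using Submodule.span_induction with
  | mem x hx =>
    obtain ⟨a, ha, b, hb, rfl⟩ := hx
    rw [mul_assoc]
    exact mem_pmul ha (hJ b hb r)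
  | zero => simpa using (pmul I J).zero_mem
  | add x y _ _ hx hy => rw [add_mul]; exact (pmul I J).add_mem hx hy
  | smul c x _ hx =>
    rw [smul_eq_mul, mul_assoc]
    exact (pmul I J).smul_mem c hx

lemma pmul_assoc_le {P A B : Ideal R} (hP : IsTwoSidedI P) :
    pmul P (pmul A B) ≤ pmul (pmul P A) B := by
  refine pmul_le.2 fun p hp x hx => ?_
  induction hx using Submodule.span_induction generalizing p with
  | mem x hx =>
    obtain ⟨a, ha, b, hb, rfl⟩ := hx
    rw [← mul_assoc]
    exact mem_pmul (mem_pmul hp ha) hb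
  | zero => simpa using (pmul (pmul P A) B).zero_mem
  | add x y _ _ hx hy => rw [mul_add]; exact Submodule.add_mem _ (hx p hp) (hy p hp)
  | smul c x _ hx =>
    rw [smul_eq_mul, ← mul_assoc]
    exact hx _ (hP p hp c)

/-- product of a list of ideals -/
def listProd (L : List (Ideal R)) : Ideal R := L.foldr pmul ⊤

@[simp] lemma listProd_nil : listProd ([] : List (Ideal R)) = ⊤ := rfl
@[simp] lemma listProd_cons (p : Ideal R) (L : List (Ideal R)) :
    listProd (p :: L) = pmul p (listProd L) := rfl

lemma listProd_twoSided {L : List (Ideal R)} (h : ∀ p ∈ L, IsTwoSidedI p) :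
    IsTwoSidedI (listProd L) := by
  induction L with
  | nil => intro a _ r; exact Submodule.mem_top
  | cons p t ih =>
    exact pmul_twoSided (ih fun q hq => h q (List.mem_cons_of_mem _ hq))

lemma listProd_le_mem {L : List (Ideal R)} (h : ∀ p ∈ L, IsTwoSidedI p)
    {p : Ideal R} (hp : p ∈ L) : listProd L ≤ p := by
  induction L with
  | nil => cases hp
  | cons q t ih =>
    rcases List.mem_cons.1 hp with rfl | hp
    · exact le_trans (pmul_le_left (h p (List.mem_cons_self))) le_rfl
    · exact le_trans pmul_le_right (ih (fun r hr => h r (List.mem_cons_of_mem _ hr)) hp)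

lemma listProd_le_prime {L : List (Ideal R)} {P : Ideal R} (hP : IsPrimeTS P)
    (h : ∀ p ∈ L, IsTwoSidedI p) (hle : listProd L ≤ P) : ∃ p ∈ L, p ≤ P := by
  induction L with
  | nil =>
    exact absurd (top_le_iff.1 (by simpa using hle)) hP.2.1
  | cons q t ih =>
    have h2 : ∀ p ∈ t, IsTwoSidedI p := fun r hr => h r (List.mem_cons_of_mem _ hr)
    rcases hP.2.2 q (listProd t) (h q (List.mem_cons_self)) (listProd_twoSided h2)
        (fun a ha b hb => hle (by simpa using mem_pmul ha hb)) with hq | ht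
    · exact ⟨q, (List.mem_cons_self), hq⟩
    · obtain ⟨p, hp, hple⟩ := ih h2 ht
      exact ⟨p, List.mem_cons_of_mem _ hp, hple⟩

lemma listProd_replicate_mono {n : ℕ} {A B : Ideal R} (h : A ≤ B) :
    listProd (List.replicate n A) ≤ listProd (List.replicate n B) := by
  induction n with
  | zero => simp
  | succ n ih => simpa [List.replicate_succ] using pmul_mono h ih

lemma listProd_replicate_le {L : List (Ideal R)} {X : Ideal R} (h : ∀ p ∈ L, X ≤ p) :
    listProd (List.replicate L.length X) ≤ listProd L := by
  induction L with
  | nil => simp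
  | cons q t ih =>
    simpa [List.replicate_succ] using
      pmul_mono (h q (List.mem_cons_self)) (ih fun r hr => h r (List.mem_cons_of_mem _ hr))

end PMul

section GT
variable {R : Type*} [Ring R] {G : Type*} [Group G] [MulSemiringAction G R]

lemma gTrans_mem {g : G} {I : Ideal R} {x : R} : x ∈ gTrans g I ↔ g • x ∈ I := Iff.rfl

lemma gTrans_comp (g h : G) (I : Ideal R) : gTrans g (gTrans h I) = gTrans (h * g) I := by
  ext x; simp [gTrans_mem, mul_smul]

lemma gTrans_one (I : Ideal R) : gTrans (1 : G) I = I := by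
  ext x; simp [gTrans_mem]

lemma gTrans_cancel (g : G) (I : Ideal R) : gTrans g⁻¹ (gTrans g I) = I := by
  rw [gTrans_comp, mul_inv_cancel, gTrans_one]

lemma gTrans_cancel' (g : G) (I : Ideal R) : gTrans g (gTrans g⁻¹ I) = I := by
  rw [gTrans_comp, inv_mul_cancel, gTrans_one]

lemma gTrans_mono {g : G} {I J : Ideal R} (h : I ≤ J) : gTrans g I ≤ gTrans g J :=
  fun _ hx => h hx

lemma gTrans_inj {g : G} : Function.Injective (gTrans (R := R) g) := by
  intro I J h
  have := congrArg (gTrans g⁻¹) h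
  rwa [gTrans_cancel, gTrans_cancel] at this

lemma gTrans_ne_top {g : G} {I : Ideal R} (h : I ≠ ⊤) : gTrans g I ≠ ⊤ := by
  intro hc
  apply h
  rw [← gTrans_cancel g I, hc]
  ext x; simp [gTrans_mem]

lemma gTrans_twoSided {g : G} {I : Ideal R} (h : IsTwoSidedI I) : IsTwoSidedI (gTrans g I) := by
  intro a ha r
  rw [gTrans_mem, smul_mul']
  exact h _ ha _

lemma gTrans_prime {g : G} {P : Ideal R} (hP : IsPrimeTS P) : IsPrimeTS (gTrans g P) := by
  refine ⟨gTrans_twoSided hP.1, gTrans_ne_top hP.2.1, ?_⟩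
  intro I J hI hJ h
  have key : ∀ a ∈ gTrans g⁻¹ I, ∀ b ∈ gTrans g⁻¹ J, a * b ∈ P := by
    intro a ha b hb
    rw [gTrans_mem] at ha hb
    have h2 := h _ ha _ hb
    rw [gTrans_mem, smul_mul', smul_inv_smul, smul_inv_smul] at h2
    exact h2
  rcases hP.2.2 _ _ (gTrans_twoSided hI) (gTrans_twoSided hJ) key with h1 | h1
  · left
    calc I = gTrans g (gTrans g⁻¹ I) := (gTrans_cancel' g I).symm
    _ ≤ gTrans g P := gTrans_mono h1
  · right
    calc J = gTrans g (gTrans g⁻¹ J) := (gTrans_cancel' g J).symm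
    _ ≤ gTrans g P := gTrans_mono h1

end GT

section GT2
variable {R : Type*} [Ring R] {G : Type*} [Group G] [MulSemiringAction G R]

lemma pmul_le_gTrans {g : G} {I J : Ideal R} :
    pmul (gTrans g I) (gTrans g J) ≤ gTrans g (pmul I J) := by
  refine pmul_le.2 fun a ha b hb => ?_
  rw [gTrans_mem, smul_mul']
  exact mem_pmul ha hb

lemma gTrans_pmul (g : G) (I J : Ideal R) :
    gTrans g (pmul I J) = pmul (gTrans g I) (gTrans g J) := by
  refine le_antisymm ?_ pmul_le_gTrans
  have h := pmul_le_gTrans (g := g⁻¹) (I := gTrans g I) (J := gTrans g J)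
  rw [gTrans_cancel, gTrans_cancel] at h
  have h2 := gTrans_mono (g := g) h
  rwa [gTrans_cancel'] at h2

lemma gTrans_iInf {ι : Sort*} (g : G) (f : ι → Ideal R) :
    gTrans g (⨅ i, f i) = ⨅ i, gTrans g (f i) := by
  ext x
  simp [gTrans_mem, Submodule.mem_iInf]

lemma gTrans_sInf (g : G) (S : Set (Ideal R)) :
    gTrans g (sInf S) = sInf (gTrans g '' S) := by
  ext x
  simp only [gTrans_mem, Submodule.mem_sInf, Set.forall_mem_image, gTrans_mem]

lemma gIdeal_top : IsGIdeal G (⊤ : Ideal R) :=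
  ⟨fun _ _ _ => Submodule.mem_top, fun g => by ext x; simp [gTrans_mem]⟩

lemma gIdeal_pmul {I J : Ideal R} (hI : IsGIdeal G I) (hJ : IsGIdeal G J) :
    IsGIdeal G (pmul I J) := by
  refine ⟨pmul_twoSided hJ.1, fun g => ?_⟩
  rw [gTrans_pmul, hI.2, hJ.2]

lemma gIdeal_sInf {S : Set (Ideal R)} (hts : ∀ p ∈ S, IsTwoSidedI p)
    (hst : ∀ g : G, gTrans g '' S = S) : IsGIdeal G (sInf S) := by
  refine ⟨?_, fun g => by rw [gTrans_sInf, hst]⟩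
  intro a ha r
  rw [Submodule.mem_sInf] at ha ⊢
  exact fun p hp => hts p hp a (ha p hp) r

lemma le_gTrans_of_GIdeal {Q I : Ideal R} (hQ : ∀ g : G, gTrans g Q = Q) {g : G}
    (h : Q ≤ I) : Q ≤ gTrans g I := by
  conv_lhs => rw [← hQ g]
  exact gTrans_mono h

/-- Part (a): `(P : G)` is `G`-prime. -/
lemma resGIdeal_gPrime {P : Ideal R} (hP : IsPrimeTS P) : IsGPrime G (resGIdeal G P) := by
  have hle : resGIdeal G P ≤ P := by
    have := iInf_le (fun g : G => gTrans g P) 1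
    rwa [gTrans_one] at this
  refine ⟨⟨?_, ?_⟩, ?_, ?_⟩
  · intro a ha r
    rw [resGIdeal, Submodule.mem_iInf] at ha ⊢
    exact fun g => gTrans_twoSided hP.1 a (ha g) r
  · intro g
    show gTrans g (⨅ k : G, gTrans k P) = ⨅ k : G, gTrans k P
    rw [gTrans_iInf]
    have : ∀ k : G, gTrans g (gTrans k P) = gTrans ((Equiv.mulRight g) k) P := fun k => by
      rw [gTrans_comp]; rfl
    simp_rw [this]
    exact Equiv.iInf_comp (g := fun k : G => gTrans k P) (Equiv.mulRight g)
  · intro hc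
    exact hP.2.1 (top_le_iff.1 (hc ▸ hle))
  · intro I J hI hJ h
    rcases hP.2.2 I J hI.1 hJ.1 (fun a ha b hb => hle (h a ha b hb)) with h1 | h1
    · exact Or.inl (le_iInf fun g => by rw [← hI.2 g]; exact gTrans_mono h1)
    · exact Or.inr (le_iInf fun g => by rw [← hJ.2 g]; exact gTrans_mono h1)

/-- If a `G`-ideal has a power inside a `G`-prime, it is inside. -/
lemma gPrime_pow_le {Q A : Ideal R} (hQ : IsGPrime G Q) (hA : IsGIdeal G A) :
    ∀ n : ℕ, listProd (List.replicate (n + 1) A) ≤ Q → A ≤ Q := by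
  intro n
  induction n with
  | zero =>
    intro h
    exact le_trans le_pmul_top (by simpa using h)
  | succ n ih =>
    intro h
    rw [List.replicate_succ, listProd_cons] at h
    have hrep : IsGIdeal G (listProd (List.replicate (n + 1) A)) := by
      clear h ih
      induction (n + 1) with
      | zero => exact gIdeal_top
      | succ m ihm => rw [List.replicate_succ, listProd_cons]; exact gIdeal_pmul hA ihm
    rcases hQ.2.2 A _ hA hrep (fun a ha b hb => h (mem_pmul ha hb)) with h1 | h1
    · exact h1
    · exact ih h1

end GT2

section Decomp
variable {R : Type*} [Ring R]

lemma sup_twoSided {I J : Ideal R} (hI : IsTwoSidedI I) (hJ : IsTwoSidedI J) :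
    IsTwoSidedI (I ⊔ J) := by
  intro a ha r
  rw [Submodule.mem_sup] at ha ⊢
  obtain ⟨x, hx, y, hy, rfl⟩ := ha
  exact ⟨x * r, hI x hx r, y * r, hJ y hy r, (add_mul x y r).symm⟩

lemma listProd_append_le {L1 L2 : List (Ideal R)} (h : ∀ p ∈ L1, IsTwoSidedI p) :
    listProd (L1 ++ L2) ≤ pmul (listProd L1) (listProd L2) := by
  induction L1 with
  | nil => simpa using le_top_pmul
  | cons p t ih =>
    have h2 : ∀ q ∈ t, IsTwoSidedI q := fun q hq => h q (List.mem_cons_of_mem _ hq)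
    calc listProd ((p :: t) ++ L2) = pmul p (listProd (t ++ L2)) := rfl
    _ ≤ pmul p (pmul (listProd t) (listProd L2)) := pmul_mono le_rfl (ih h2)
    _ ≤ pmul (pmul p (listProd t)) (listProd L2) :=
        pmul_assoc_le (h p (List.mem_cons_self))

/-- In a noetherian ring every proper two-sided ideal contains a finite product of primes
containing it. -/
lemma exists_prime_prod_le [IsNoetherianRing R] :
    ∀ Q : Ideal R, IsTwoSidedI Q → Q ≠ ⊤ →
      ∃ L : List (Ideal R), (∀ p ∈ L, IsPrimeTS p ∧ Q ≤ p) ∧ listProd L ≤ Q := by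
  intro Q
  induction Q using IsNoetherian.induction with
  | _ Q ih =>
  intro hQ hQtop
  by_cases hp : IsPrimeTS Q
  · refine ⟨[Q], by simp [hp], ?_⟩
    simpa using pmul_le_left hQ
  · have : ∃ I J : Ideal R, IsTwoSidedI I ∧ IsTwoSidedI J ∧
        (∀ a ∈ I, ∀ b ∈ J, a * b ∈ Q) ∧ ¬ I ≤ Q ∧ ¬ J ≤ Q := by
      by_contra hc
      push_neg at hc
      exact hp ⟨hQ, hQtop, fun I J hI hJ h => by
        by_contra hc2
        push_neg at hc2
        exact hc2.2 (hc I J hI hJ h hc2.1)⟩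
    obtain ⟨I, J, hI, hJ, hprod, hIQ, hJQ⟩ := this
    set I' := I ⊔ Q with hI'def
    set J' := J ⊔ Q with hJ'def
    have hI't : IsTwoSidedI I' := sup_twoSided hI hQ
    have hJ't : IsTwoSidedI J' := sup_twoSided hJ hQ
    have hprod' : ∀ a ∈ I', ∀ b ∈ J', a * b ∈ Q := by
      intro a ha b hb
      rw [hI'def, Submodule.mem_sup] at ha
      rw [hJ'def, Submodule.mem_sup] at hb
      obtain ⟨x, hx, y, hy, rfl⟩ := ha
      obtain ⟨u, hu, v, hv, rfl⟩ := hb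
      have h1 : x * u ∈ Q := hprod x hx u hu
      have h2 : x * v ∈ Q := Q.smul_mem x hv
      have h3 : y * u ∈ Q := hQ y hy u
      have h4 : y * v ∈ Q := Q.smul_mem y hv
      have heq : (x + y) * (u + v) = x * u + x * v + (y * u + y * v) := by rw [add_mul, mul_add, mul_add]
      rw [heq]
      exact Q.add_mem (Q.add_mem h1 h2) (Q.add_mem h3 h4)
    have hIgt : Q < I' := lt_of_le_of_ne le_sup_right
      (fun h => hIQ (le_trans le_sup_left (le_of_eq h.symm)))
    have hJgt : Q < J' := lt_of_le_of_ne le_sup_right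
      (fun h => hJQ (le_trans le_sup_left (le_of_eq h.symm)))
    have hI'top : I' ≠ ⊤ := by
      intro hc
      apply hJQ
      intro b hb
      have h1 : (1 : R) ∈ I' := hc ▸ Submodule.mem_top
      rw [hI'def, Submodule.mem_sup] at h1
      obtain ⟨x, hx, q, hq, hxq⟩ := h1
      have : b = x * b + q * b := by rw [← add_mul, hxq, one_mul]
      rw [this]
      exact Q.add_mem (hprod x hx b hb) (hQ q hq b)
    have hJ'top : J' ≠ ⊤ := by
      intro hc
      apply hIQ
      intro a ha
      have h1 : (1 : R) ∈ J' := hc ▸ Submodule.mem_top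
      rw [hJ'def, Submodule.mem_sup] at h1
      obtain ⟨x, hx, q, hq, hxq⟩ := h1
      have : a = a * x + a * q := by rw [← mul_add, hxq, mul_one]
      rw [this]
      exact Q.add_mem (hprod a ha x hx) (Q.smul_mem a hq)
    obtain ⟨L1, hL1, hL1le⟩ := ih I' hIgt hI't hI'top
    obtain ⟨L2, hL2, hL2le⟩ := ih J' hJgt hJ't hJ'top
    refine ⟨L1 ++ L2, ?_, ?_⟩
    · intro p hp
      rcases List.mem_append.1 hp with h1 | h1
      · exact ⟨(hL1 p h1).1, le_trans hIgt.le (hL1 p h1).2⟩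
      · exact ⟨(hL2 p h1).1, le_trans hJgt.le (hL2 p h1).2⟩
    · calc listProd (L1 ++ L2) ≤ pmul (listProd L1) (listProd L2) :=
            listProd_append_le (fun p hp => (hL1 p hp).1.1)
      _ ≤ pmul I' J' := pmul_mono hL1le hL2le
      _ ≤ Q := pmul_le.2 hprod'

end Decomp

section MinPrime
variable {R : Type*} [Ring R]

/-- the set of primes minimal over `Q` -/
def minOver (Q : Ideal R) : Set (Ideal R) :=
  {P | IsPrimeTS P ∧ Q ≤ P ∧ ∀ P'', IsPrimeTS P'' → Q ≤ P'' → P'' ≤ P → P'' = P}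

lemma sInf_chain_prime {c : Set (Ideal R)} (hchain : IsChain (· ≤ ·) c)
    (hne : c.Nonempty) (hmem : ∀ p ∈ c, IsPrimeTS p) : IsPrimeTS (sInf c) := by
  obtain ⟨y, hy⟩ := hne
  refine ⟨?_, ?_, ?_⟩
  · intro a ha r
    rw [Submodule.mem_sInf] at ha ⊢
    exact fun p hp => (hmem p hp).1 a (ha p hp) r
  · intro hc
    have h1 : (1 : R) ∈ sInf c := hc ▸ Submodule.mem_top
    rw [Submodule.mem_sInf] at h1
    exact (hmem y hy).2.1 ((Ideal.eq_top_iff_one _).2 (h1 y hy))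
  · intro I J hI hJ hprod
    by_contra hcon
    push_neg at hcon
    obtain ⟨h1, h2⟩ := hcon
    rw [le_sInf_iff] at h1 h2
    push_neg at h1 h2
    obtain ⟨q1, hq1, hp1⟩ := h1
    obtain ⟨q2, hq2, hp2⟩ := h2
    have key : ∀ q ∈ c, I ≤ q ∨ J ≤ q := by
      intro q hq
      exact (hmem q hq).2.2 I J hI hJ
        (fun a ha b hb => Submodule.mem_sInf.1 (hprod a ha b hb) q hq)
    rcases eq_or_ne q1 q2 with rfl | hne'
    · rcases key q1 hq1 with h | h
      · exact hp1 h
      · exact hp2 h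
    · rcases hchain.total hq1 hq2 with hle | hle
      · rcases key q1 hq1 with h | h
        · exact hp1 h
        · exact hp2 (le_trans h hle)
      · rcases key q2 hq2 with h | h
        · exact hp1 (le_trans h hle)
        · exact hp2 h

/-- Every prime over `Q` contains a prime minimal over `Q`. -/
lemma exists_minOver_le {Q P : Ideal R} (hP : IsPrimeTS P) (hQP : Q ≤ P) :
    ∃ P', P' ∈ minOver Q ∧ P' ≤ P := by
  let s : Set (Ideal R)ᵒᵈ :=
    {p : (Ideal R)ᵒᵈ | IsPrimeTS (OrderDual.ofDual p) ∧ Q ≤ OrderDual.ofDual p}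
  have hchain : ∀ c ⊆ s, IsChain (· ≤ ·) c → ∀ y ∈ c,
      ∃ ub ∈ s, ∀ z ∈ c, z ≤ ub := by
    intro c hcs hc y hy
    set c' : Set (Ideal R) := OrderDual.ofDual '' c with hc'def
    have hchain' : IsChain (· ≤ ·) c' := by
      rintro _ ⟨p, hp, rfl⟩ _ ⟨q, hq, rfl⟩ hne
      exact (hc hq hp (fun h => hne (congrArg _ h.symm))).imp (fun h => h) (fun h => h)
    have hne' : c'.Nonempty := ⟨OrderDual.ofDual y, y, hy, rfl⟩
    have hmem' : ∀ p ∈ c', IsPrimeTS p := by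
      rintro _ ⟨p, hp, rfl⟩; exact (hcs hp).1
    refine ⟨OrderDual.toDual (sInf c'), ⟨?_, ?_⟩, ?_⟩
    · exact sInf_chain_prime hchain' hne' hmem'
    · exact le_sInf (by rintro _ ⟨p, hp, rfl⟩; exact (hcs hp).2)
    · intro z hz
      show sInf c' ≤ OrderDual.ofDual z
      exact sInf_le ⟨z, hz, rfl⟩
  obtain ⟨m, hPm, hmax⟩ := zorn_le_nonempty₀ s hchain (OrderDual.toDual P) ⟨hP, hQP⟩
  refine ⟨OrderDual.ofDual m, ⟨hmax.prop.1, hmax.prop.2, ?_⟩, hPm⟩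
  intro P'' hP'' hQP'' hle
  exact le_antisymm hle (hmax.2 (y := OrderDual.toDual P'') ⟨hP'', hQP''⟩ hle)

end MinPrime

section Core
variable {R : Type*} [Ring R]

lemma exists_minOver_prod_le [IsNoetherianRing R] {Q : Ideal R}
    (hQ : IsTwoSidedI Q) (hQtop : Q ≠ ⊤) :
    ∃ L : List (Ideal R), (∀ p ∈ L, p ∈ minOver Q) ∧ listProd L ≤ Q := by
  obtain ⟨L, hL, hLle⟩ := exists_prime_prod_le Q hQ hQtop
  suffices h : ∀ L0 : List (Ideal R), (∀ p ∈ L0, IsPrimeTS p ∧ Q ≤ p) →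
      ∃ L', (∀ p ∈ L', p ∈ minOver Q) ∧ listProd L' ≤ listProd L0 by
    obtain ⟨L', h1, h2⟩ := h L hL
    exact ⟨L', h1, le_trans h2 hLle⟩
  intro L0
  induction L0 with
  | nil => intro _; exact ⟨[], by simp, le_rfl⟩
  | cons p t ih =>
    intro hmem
    obtain ⟨L', h1, h2⟩ := ih (fun q hq => hmem q (List.mem_cons_of_mem _ hq))
    obtain ⟨p', hp', hp'le⟩ := exists_minOver_le (hmem p (List.mem_cons_self)).1
        (hmem p (List.mem_cons_self)).2
    refine ⟨p' :: L', ?_, by simpa using pmul_mono hp'le h2⟩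
    intro q hq
    rcases List.mem_cons.1 hq with rfl | hq
    · exact hp'
    · exact h1 q hq

lemma minOver_finite [IsNoetherianRing R] {Q : Ideal R}
    (hQ : IsTwoSidedI Q) (hQtop : Q ≠ ⊤) : (minOver Q).Finite := by
  obtain ⟨L, hL, hLle⟩ := exists_minOver_prod_le hQ hQtop
  refine Set.Finite.subset L.finite_toSet ?_
  intro P hP
  obtain ⟨p, hp, hple⟩ := listProd_le_prime hP.1 (fun q hq => (hL q hq).1.1)
      (le_trans hLle hP.2.1)
  have heq := hP.2.2 p (hL p hp).1 (hL p hp).2.1 hple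
  rw [heq] at hp
  exact hp

variable {G : Type*} [Group G] [MulSemiringAction G R]

lemma gTrans_minOver {Q : Ideal R} (hQ : ∀ g : G, gTrans g Q = Q) {P : Ideal R}
    (hP : P ∈ minOver Q) (g : G) : gTrans g P ∈ minOver Q := by
  refine ⟨gTrans_prime hP.1, le_gTrans_of_GIdeal hQ hP.2.1, ?_⟩
  intro P'' h1 h2 h3
  have h3' : gTrans g⁻¹ P'' ≤ P := by
    have := gTrans_mono (g := g⁻¹) h3
    rwa [gTrans_cancel] at this
  have h4 := hP.2.2 _ (gTrans_prime h1) (le_gTrans_of_GIdeal hQ h2) h3'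
  calc P'' = gTrans g (gTrans g⁻¹ P'') := (gTrans_cancel' g P'').symm
  _ = gTrans g P := congrArg _ h4

lemma resGIdeal_eq_of_minOver [IsNoetherianRing R]
    {Q P : Ideal R} (hQ : IsGPrime G Q) (hP : P ∈ minOver Q) : resGIdeal G P = Q := by
  classical
  set O : Set (Ideal R) := Set.range (fun g : G => gTrans g P) with hOdef
  have hOsub : O ⊆ minOver Q := by rintro _ ⟨g, rfl⟩; exact gTrans_minOver hQ.1.2 hP g
  have hMfin := minOver_finite hQ.1.1 hQ.2.1
  have hres : resGIdeal G P = sInf O := sInf_range.symm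
  have hQle : Q ≤ sInf O := le_sInf (by rintro _ ⟨g, rfl⟩; exact le_gTrans_of_GIdeal hQ.1.2 hP.2.1)
  have hOstab : ∀ g : G, gTrans g '' O = O := by
    intro g
    ext q
    constructor
    · rintro ⟨_, ⟨h, rfl⟩, rfl⟩
      exact ⟨h * g, (gTrans_comp g h P).symm⟩
    · rintro ⟨h, rfl⟩
      exact ⟨gTrans (h * g⁻¹) P, ⟨h * g⁻¹, rfl⟩, by rw [gTrans_comp, inv_mul_cancel_right]⟩
  have hMstab : ∀ g : G, gTrans g '' minOver Q = minOver Q := by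
    intro g
    ext q
    constructor
    · rintro ⟨p, hp, rfl⟩
      exact gTrans_minOver hQ.1.2 hp g
    · intro hq
      exact ⟨gTrans g⁻¹ q, gTrans_minOver hQ.1.2 hq g⁻¹, gTrans_cancel' g q⟩
  set C : Set (Ideal R) := minOver Q \ O with hCdef
  have hCsub : C ⊆ minOver Q := Set.diff_subset
  have hCstab : ∀ g : G, gTrans g '' C = C := by
    intro g
    rw [hCdef, Set.image_diff gTrans_inj, hMstab, hOstab]
  have hCfin : C.Finite := hMfin.subset hCsub
  set I : Ideal R := sInf O with hIdef
  set J : Ideal R := sInf C with hJdef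
  have hIG : IsGIdeal G I := gIdeal_sInf (fun p hp => (hOsub hp).1.1) hOstab
  have hJG : IsGIdeal G J := gIdeal_sInf (fun p hp => (hCsub hp).1.1) hCstab
  have hIJ : pmul I J ≤ sInf (minOver Q) := by
    have h1 : pmul I J ≤ I ⊓ J := le_inf (pmul_le_left hIG.1) pmul_le_right
    have h2 : I ⊓ J = sInf (O ∪ C) := (sInf_union).symm
    have h3 : O ∪ C = minOver Q := Set.union_diff_cancel hOsub
    rw [h2, h3] at h1
    exact h1
  obtain ⟨L, hL, hLle⟩ := exists_minOver_prod_le hQ.1.1 hQ.2.1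
  have hLne : L ≠ [] := by
    rintro rfl
    exact hQ.2.1 (top_le_iff.1 (by simpa using hLle))
  have hn : listProd (List.replicate L.length (sInf (minOver Q))) ≤ Q :=
    le_trans (listProd_replicate_le (fun p hp => sInf_le (hL p hp))) hLle
  have hpow : listProd (List.replicate L.length (pmul I J)) ≤ Q :=
    le_trans (listProd_replicate_mono hIJ) hn
  obtain ⟨n, hn'⟩ : ∃ n, L.length = n + 1 :=
    ⟨L.length - 1, (Nat.succ_pred_eq_of_pos (List.length_pos_iff.2 hLne)).symm⟩
  rw [hn'] at hpow
  have hIJQ : pmul I J ≤ Q := gPrime_pow_le hQ (gIdeal_pmul hIG hJG) n hpow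
  rcases hQ.2.2 I J hIG hJG (fun a ha b hb => hIJQ (mem_pmul ha hb)) with h | h
  · rw [hres]
    exact le_antisymm h hQle
  · exfalso
    set LC := hCfin.toFinset.toList with hLCdef
    have hLCmem : ∀ p, p ∈ LC ↔ p ∈ C := fun p => by
      rw [hLCdef, Finset.mem_toList, Set.Finite.mem_toFinset]
    have h1 : listProd LC ≤ P := by
      refine le_trans (le_sInf fun p hp => listProd_le_mem
        (fun q hq => ((hLCmem q).1 hq).1.1.1) ((hLCmem p).2 hp)) (le_trans h hP.2.1)
    obtain ⟨q, hq, hqle⟩ := listProd_le_prime hP.1 (fun q hq => ((hLCmem q).1 hq).1.1.1) h1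
    have hqC : q ∈ C := (hLCmem q).1 hq
    have hqP : q = P := hP.2.2 q hqC.1.1 hqC.1.2.1 hqle
    refine hqC.2 ?_
    rw [hqP]
    exact ⟨1, gTrans_one P⟩

end Core

/-- Lemma 1.10: (a) `(P : G)` is `G`-prime for every prime `P`;
(b) if `P` is a prime minimal over a `G`-prime `Q`, then `Q = (P : G)`, every prime
minimal over `Q` is in the `G`-orbit of `P`, and `Q` is semiprime. -/
theorem stmt_4 {R : Type*} [Ring R] [IsNoetherianRing R] [IsNoetherianRing Rᵐᵒᵖ]
    (G : Type*) [Group G] [MulSemiringAction G R] :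
    (∀ P : Ideal R, IsPrimeTS P → IsGPrime G (resGIdeal G P)) ∧
    (∀ Q : Ideal R, IsGPrime G Q → ∀ P : Ideal R, IsPrimeTS P → Q ≤ P →
      (∀ P', IsPrimeTS P' → Q ≤ P' → P' ≤ P → P' = P) →
        resGIdeal G P = Q ∧
        (∀ P', IsPrimeTS P' → Q ≤ P' →
          (∀ P'', IsPrimeTS P'' → Q ≤ P'' → P'' ≤ P' → P'' = P') →
          ∃ g : G, P' = gTrans g P) ∧
        ∃ T : Set (Ideal R), (∀ P'' ∈ T, IsPrimeTS P'') ∧ Q = sInf T) := by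
  constructor
  · exact fun P hP => resGIdeal_gPrime hP
  · intro Q hQ P hP hQP hmin
    have hPmem : P ∈ minOver Q := ⟨hP, hQP, hmin⟩
    have h1 : resGIdeal G P = Q := resGIdeal_eq_of_minOver hQ hPmem
    refine ⟨h1, ?_, ?_⟩
    · intro P' hP' hQP' hmin'
      have hP'mem : P' ∈ minOver Q := ⟨hP', hQP', hmin'⟩
      have h2 : resGIdeal G P' = Q := resGIdeal_eq_of_minOver hQ hP'mem
      classical
      set O' : Set (Ideal R) := Set.range (fun g : G => gTrans g P') with hO'def
      have hO'sub : O' ⊆ minOver Q := by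
        rintro _ ⟨g, rfl⟩; exact gTrans_minOver hQ.1.2 hP'mem g
      have hO'fin : O'.Finite := (minOver_finite hQ.1.1 hQ.2.1).subset hO'sub
      set LO := hO'fin.toFinset.toList with hLOdef
      have hLOmem : ∀ p, p ∈ LO ↔ p ∈ O' := fun p => by
        rw [hLOdef, Finset.mem_toList, Set.Finite.mem_toFinset]
      have hsub : listProd LO ≤ P := by
        refine le_trans (le_sInf fun p hp => listProd_le_mem
          (fun q hq => (hO'sub ((hLOmem q).1 hq)).1.1) ((hLOmem p).2 hp)) ?_
        have : sInf O' = Q := by rw [← h2]; exact sInf_range.symm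
        rw [this]
        exact hQP
      obtain ⟨q, hq, hqle⟩ := listProd_le_prime hP
          (fun r hr => (hO'sub ((hLOmem r).1 hr)).1.1) hsub
      obtain ⟨g, rfl⟩ := (hLOmem q).1 hq
      have hqmem := hO'sub ((hLOmem _).1 hq)
      have hgP : gTrans g P' = P := hmin _ hqmem.1 hqmem.2.1 hqle
      refine ⟨g⁻¹, ?_⟩
      rw [← hgP, gTrans_cancel]
    · refine ⟨Set.range (fun g : G => gTrans g P), ?_, ?_⟩
      · rintro _ ⟨g, rfl⟩; exact gTrans_prime hP
      · rw [← h1]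
        exact sInf_range.symm
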